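/- If i and j are non-adjacent nodes in a DAG G, then either i and j are *-separated given pa(j), or i and j are *-separated given pa(i), where pa(v) denotes the set of parents of v. -/

import Mathlib

variable {V : Type*}

/-- Undirected adjacency in a digraph given by edge relation `E`. -/
def Adjd (E : V → V → Prop) (i j : V) : Prop := E i j ∨ E j i

/-- Parents of a node. -/
def pa (E : V → V → Prop) (j : V) : Set V := {u | E u j}

/-- A directed path from `i` to `j`, as a nonrepeating list of consecutive vertices. -/
def IsDirPath (E : V → V → Prop) (p : List V) (i j : V) : Prop :=
  p.Chain' E ∧ p.head? = some i ∧ p.getLast? = some j ∧ p.Nodup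

/-- An undirected path from `i` to `j`. -/
def IsUndirPath (E : V → V → Prop) (p : List V) (i j : V) : Prop :=
  p.Chain' (Adjd E) ∧ p.head? = some i ∧ p.getLast? = some j ∧ p.Nodup

/-- Interior (non-endpoint) vertices of a path. -/
def interiorL (p : List V) : List V := (p.drop 1).dropLast

/-- `k` is a collider on the path `p`: both path-edges at `k` point into `k`. -/
def IsColliderOn (E : V → V → Prop) (p : List V) (k : V) : Prop :=
  ∃ (l₁ l₂ : List V) (a b : V), p = l₁ ++ a :: k :: b :: l₂ ∧ E a k ∧ E b k

/-- A digraph is acyclic if it has no directed cycles. -/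
def Acyclic (E : V → V → Prop) : Prop := ∀ i, ¬ Relation.TransGen E i i

/-- `k ∈ An(K)`: `k` lies in `K` or is an ancestor of a member of `K`. -/
def InAn (E : V → V → Prop) (K : Set V) (k : V) : Prop :=
  k ∈ K ∨ ∃ m ∈ K, Relation.TransGen E k m

/-- The path `p` is d-connecting between `i` and `j` given `K`. -/
def DConnecting (E : V → V → Prop) (K : Set V) (p : List V) (i j : V) : Prop :=
  IsUndirPath E p i j ∧
  (∀ k, IsColliderOn E p k → InAn E K k) ∧
  (∀ k, k ∈ interiorL p → ¬ IsColliderOn E p k → k ∉ K)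

/-- d-separation of `i` and `j` given `K`. -/
def DSep (E : V → V → Prop) (K : Set V) (i j : V) : Prop :=
  ¬ ∃ p, DConnecting E K p i j

/-- The path `p` is *-connecting: d-connecting with at most one collider. -/
def StarConnecting (E : V → V → Prop) (K : Set V) (p : List V) (i j : V) : Prop :=
  DConnecting E K p i j ∧
  ∀ k₁ k₂, IsColliderOn E p k₁ → IsColliderOn E p k₂ → k₁ = k₂

/-- *-separation of `i` and `j` given `K`. -/
def StarSep (E : V → V → Prop) (K : Set V) (i j : V) : Prop :=
  ¬ ∃ p, StarConnecting E K p i j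

/-- The weight of a directed path: product of its edge weights. -/
def pathWeight (C : V → V → ℝ) (p : List V) : ℝ :=
  ((p.zip p.tail).map fun q => C q.1 q.2).prod

/-- A critical (maximum-weight) directed path from `i` to `j`. -/
def IsCritical (E : V → V → Prop) (C : V → V → ℝ) (p : List V) (i j : V) : Prop :=
  IsDirPath E p i j ∧ 2 ≤ p.length ∧
  ∀ q, IsDirPath E q i j → 2 ≤ q.length → pathWeight C q ≤ pathWeight C p

/-- Genericity of the weights: critical paths are unique when they exist. -/
def Generic (E : V → V → Prop) (C : V → V → ℝ) : Prop :=
  ∀ i j p q, IsCritical E C p i j → IsCritical E C q i j → p = q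

/-- Positivity of the edge weights. -/
def PosWeights (E : V → V → Prop) (C : V → V → ℝ) : Prop :=
  ∀ a b, E a b → 0 < C a b

/-- Edge of the weighted transitive reduction `G^tr_C`: the edge `i → j` is present in `G`
and every other directed `i`-`j` path has strictly smaller weight. -/
def TrEdge (E : V → V → Prop) (C : V → V → ℝ) (i j : V) : Prop :=
  E i j ∧ ∀ q, IsDirPath E q i j → 2 ≤ q.length → q ≠ [i, j] → pathWeight C q < C i j

/-- A path factors through `K` (relative to endpoints `i`,`j`). -/
def FactorsThrough (p : List V) (K : Set V) (i j : V) : Prop :=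
  ∃ k ∈ interiorL p, k ∈ K ∧ k ≠ i ∧ k ≠ j

/-- Edge of the critical DAG `G*_K(C)`. -/
def CritEdge (E : V → V → Prop) (C : V → V → ℝ) (K : Set V) (i j : V) : Prop :=
  (∃ p, IsDirPath E p i j ∧ 2 ≤ p.length) ∧
  ∀ p, IsCritical E C p i j → ¬ FactorsThrough p K i j

/-- `i` and `j` are C*-connected given `K`: one of the five types of connecting
paths exists in the critical DAG `G*_K(C)`. -/
def CStarConnected (E : V → V → Prop) (C : V → V → ℝ) (K : Set V) (i j : V) : Prop :=
  (CritEdge E C K i j ∨ CritEdge E C K j i) ∨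
  (∃ p, p ∉ K ∧ CritEdge E C K p i ∧ CritEdge E C K p j) ∨
  (∃ l ∈ K, CritEdge E C K i l ∧ CritEdge E C K j l) ∨
  (∃ p, ∃ l ∈ K, p ∉ K ∧ CritEdge E C K p i ∧ CritEdge E C K p l ∧ CritEdge E C K j l) ∨
  (∃ p, ∃ l ∈ K, p ∉ K ∧ CritEdge E C K p j ∧ CritEdge E C K p l ∧ CritEdge E C K i l) ∨
  (∃ p q, ∃ l ∈ K, p ∉ K ∧ q ∉ K ∧ CritEdge E C K p i ∧ CritEdge E C K p l ∧
    CritEdge E C K q l ∧ CritEdge E C K q j)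

/-- C*-separation of `i` and `j` given `K`. -/
def CStarSep (E : V → V → Prop) (C : V → V → ℝ) (K : Set V) (i j : V) : Prop :=
  ¬ CStarConnected E C K i j

/-- `b` immediately follows `a` in the cyclic order given by the list `p`. -/
def CycConsec (p : List V) (a b : V) : Prop :=
  ∃ t : Fin p.length, p.get t = a ∧
    p.get ⟨(t.val + 1) % p.length, Nat.mod_lt _ t.pos⟩ = b

/-- The list `p` enumerates, in cyclic order, an induced subgraph of the digraph `E`
which is (as an undirected graph) a simple cycle. -/
def IsInducedCycleList (E : V → V → Prop) (p : List V) : Prop :=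
  p.Nodup ∧ 3 ≤ p.length ∧
  ∀ a ∈ p, ∀ b ∈ p, (Adjd E a b ↔ (CycConsec p a b ∨ CycConsec p b a))

/-- `k` is a collider of the induced cycle `p`: both incident cycle edges point into `k`. -/
def CycCollider (E : V → V → Prop) (p : List V) (k : V) : Prop :=
  ∃ a b, a ≠ b ∧ CycConsec p a k ∧ CycConsec p k b ∧ E a k ∧ E b k

-- auxiliary lemmas

lemma interiorL_reverse (p : List V) : interiorL p.reverse = (interiorL p).reverse := by
  simp only [interiorL, List.drop_one, List.tail_reverse, List.dropLast_reverse]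
  rw [List.tail_dropLast]

lemma collider_reverse {E : V → V → Prop} {p : List V} {k : V}
    (h : IsColliderOn E p k) : IsColliderOn E p.reverse k := by
  obtain ⟨l₁, l₂, a, b, rfl, ha, hb⟩ := h
  exact ⟨l₂.reverse, l₁.reverse, b, a, by simp, hb, ha⟩

lemma dconn_reverse {E : V → V → Prop} {K : Set V} {p : List V} {i j : V}
    (h : DConnecting E K p i j) : DConnecting E K p.reverse j i := by
  obtain ⟨⟨hc, hh, hl, hnd⟩, hcol, hnon⟩ := h
  refine ⟨⟨?_, by simpa using hl, by simpa using hh, (List.nodup_reverse).mpr hnd⟩, ?_, ?_⟩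
  · refine List.isChain_reverse.mpr ?_
    exact hc.imp fun a b hab => hab.symm
  · intro k hk
    have := collider_reverse hk
    rw [List.reverse_reverse] at this
    exact hcol k this
  · intro k hk hnc
    rw [interiorL_reverse, List.mem_reverse] at hk
    refine hnon k hk fun hcl => hnc (collider_reverse hcl)

lemma split_unique {k : V} : ∀ (l₁ l₂ r₁ r₂ : List V), k ∉ l₁ → k ∉ l₂ →
    l₁ ++ k :: r₁ = l₂ ++ k :: r₂ → l₁ = l₂ ∧ r₁ = r₂ := by
  intro l₁
  induction l₁ with
  | nil =>
    intro l₂ r₁ r₂ _ h2 h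
    cases l₂ with
    | nil => simpa using h
    | cons c t =>
      simp only [List.nil_append, List.cons_append, List.cons.injEq] at h
      exact absurd (h.1 ▸ h2) (by simp)
  | cons a t ih =>
    intro l₂ r₁ r₂ h1 h2 h
    cases l₂ with
    | nil =>
      simp only [List.nil_append, List.cons_append, List.cons.injEq] at h
      exact absurd (h.1 ▸ h1) (by simp [h.1])
    | cons c s =>
      simp only [List.cons_append, List.cons.injEq] at h
      obtain ⟨rfl, h⟩ := h
      obtain ⟨rfl, rfl⟩ := ih s r₁ r₂ (fun hm => h1 (List.mem_cons_of_mem _ hm))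
        (fun hm => h2 (List.mem_cons_of_mem _ hm)) h
      exact ⟨rfl, rfl⟩

lemma take_cons3 (p : List V) (s : ℕ) (h : s + 2 < p.length) :
    p = p.take s ++ p.get ⟨s, by omega⟩ :: p.get ⟨s+1, by omega⟩ :: p.get ⟨s+2, by omega⟩
      :: p.drop (s+3) := by
  conv_lhs => rw [← List.take_append_drop s p]
  rw [List.drop_eq_getElem_cons (by omega), List.drop_eq_getElem_cons (by omega),
    List.drop_eq_getElem_cons (by omega)]
  rfl

lemma tg_of_edges (E : V → V → Prop) (p : List V) :
    ∀ (t : ℕ) (ht : t < p.length), 1 ≤ t →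
    (∀ s, (hs : s < t) → E (p.get ⟨s, by omega⟩) (p.get ⟨s+1, by omega⟩)) →
    Relation.TransGen E (p.get ⟨0, by omega⟩) (p.get ⟨t, ht⟩) := by
  intro t
  induction t with
  | zero => omega
  | succ n ih =>
    intro ht h1 hed
    rcases Nat.eq_or_lt_of_le h1 with h | h
    · exact Relation.TransGen.single (by simpa [← h] using hed 0 (by omega))
    · exact (ih (by omega) (by omega) (fun s hs => hed s (by omega))).tail
        (hed n (by omega))

lemma dsep_key (E : V → V → Prop) (hA : Acyclic E) (i j : V) (hij : i ≠ j)
    (hnadj : ¬ Adjd E i j) (hna : ¬ Relation.TransGen E j i) :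
    DSep E (pa E j) j i := by
  rintro ⟨p, ⟨hc, hh, hl, hnd⟩, hcol, hnon⟩
  have hne : p ≠ [] := by rintro rfl; simp at hh
  have hn1 : 1 ≤ p.length := List.length_pos_iff.mpr hne
  have hj0 : p.get ⟨0, by omega⟩ = j := by
    cases p with
    | nil => simp at hh
    | cons a q => simpa using hh
  rw [List.getLast?_eq_getElem?, List.getElem?_eq_getElem (by omega)] at hl
  have hi : p.get ⟨p.length - 1, by omega⟩ = i := by simpa using hl
  have hn2 : 2 ≤ p.length := by
    by_contra h
    have h1 : p.length = 1 := by omega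
    apply hij
    rw [← hi, ← hj0]
    congr 1
    apply Fin.ext
    simp
    omega
  have hInAn : ∀ k, InAn E (pa E j) k → Relation.TransGen E k j := by
    rintro k (hk | ⟨m, hm, hkm⟩)
    · exact Relation.TransGen.single hk
    · exact hkm.tail hm
  have key : ∀ t (ht : t + 1 < p.length), E (p.get ⟨t, by omega⟩) (p.get ⟨t + 1, ht⟩) := by
    intro t
    induction t using Nat.strong_induction_on with
    | _ t IH =>
    intro ht
    have hadj : Adjd E (p.get ⟨t, by omega⟩) (p.get ⟨t + 1, ht⟩) :=
      List.isChain_iff_getElem.mp hc t (by omega)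
    by_cases hE : E (p.get ⟨t + 1, ht⟩) (p.get ⟨t, by omega⟩)
    · exfalso
      rcases Nat.eq_zero_or_pos t with rfl | hpos
      · -- base case: edge between p[0] = j and p[1]
        have hE' : E (p.get ⟨1, ht⟩) j := by rwa [hj0] at hE
        rcases Nat.lt_or_ge (p.length) 3 with h3 | h3
        · -- p.length = 2, so p[1] = i, adjacency contradiction
          have h2 : p.length = 2 := by omega
          have : p.get ⟨1, ht⟩ = i := by
            rw [← hi]; congr 1; apply Fin.ext; simp; omega
          exact hnadj (Or.inl (this ▸ hE'))
        · -- p[1] is interior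
          have hdec0 : p = p.get ⟨0, by omega⟩ :: p.get ⟨1, by omega⟩ ::
              p.get ⟨2, by omega⟩ :: p.drop 3 := by
            simpa using take_cons3 p 0 (by omega)
          have h5 : (p.drop 1).dropLast = p.get ⟨1, by omega⟩ ::
              (p.get ⟨2, by omega⟩ :: p.drop 3).dropLast := by
            conv_lhs => rw [hdec0]
            rfl
          have hmem : p.get ⟨1, ht⟩ ∈ interiorL p := by
            rw [interiorL, h5]
            exact List.mem_cons_self
          have hcolr : IsColliderOn E p (p.get ⟨1, ht⟩) := by
            by_contra hncol
            exact hnon _ hmem hncol hE'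
          obtain ⟨l₁, l₂, a, b, hdec, hav, hbv⟩ := hcolr
          have hdec' : p = (l₁ ++ [a]) ++ p.get ⟨1, ht⟩ :: b :: l₂ := by simpa using hdec
          have hnotmem : p.get ⟨1, ht⟩ ∉ l₁ ++ [a] := by
            have h := hnd
            rw [hdec', List.nodup_append] at h
            intro hmem2
            exact h.2.2 _ hmem2 _ List.mem_cons_self rfl
          have hne01 : p.get ⟨1, ht⟩ ≠ j := by
            rw [← hj0]
            intro hh1
            have := (List.Nodup.get_inj_iff hnd).mp hh1
            simp at this
          have hdec2 : p = [j] ++ p.get ⟨1, ht⟩ :: (p.get ⟨2, by omega⟩ :: p.drop 3) := by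
            rw [← hj0]; simpa using hdec0
          obtain ⟨hleft, _⟩ := split_unique (l₁ ++ [a]) [j] _ _ hnotmem (by simpa using hne01)
            (hdec'.symm.trans hdec2)
          have ha : a = j := by
            cases l₁ with
            | nil => simpa using hleft
            | cons c s => simp at hleft
          exact hA j ((Relation.TransGen.single (ha ▸ hav)).tail hE')
      · obtain ⟨s, rfl⟩ : ∃ s, t = s + 1 := ⟨t - 1, by omega⟩
        have hcl : IsColliderOn E p (p.get ⟨s + 1, by omega⟩) :=
          ⟨p.take s, p.drop (s + 3), p.get ⟨s, by omega⟩, p.get ⟨s + 2, by omega⟩,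
            take_cons3 p s (by omega), IH s (by omega) (by omega), hE⟩
        have h1 : Relation.TransGen E (p.get ⟨s + 1, by omega⟩) j := hInAn _ (hcol _ hcl)
        have h2 : Relation.TransGen E (p.get ⟨0, by omega⟩) (p.get ⟨s + 1, by omega⟩) :=
          tg_of_edges E p (s + 1) (by omega) (by omega) (fun u hu => IH u (by omega) (by omega))
        rw [hj0] at h2
        exact hA j (h2.trans h1)
    · rcases hadj with h | h
      · exact h
      · exact absurd h hE
  have hfin : Relation.TransGen E (p.get ⟨0, by omega⟩) (p.get ⟨p.length - 1, by omega⟩) :=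
    tg_of_edges E p (p.length - 1) (by omega) (by omega) (fun s hs => key s (by omega))
  rw [hj0, hi] at hfin
  exact hna hfin

/-- If `i` and `j` are non-adjacent nodes in a DAG, then either they are
*-separated given `pa j`, or they are *-separated given `pa i`. -/
theorem starsep_given_parents
    (E : V → V → Prop) (hA : Acyclic E) (i j : V) (hij : i ≠ j)
    (hnadj : ¬ Adjd E i j) :
    StarSep E (pa E j) i j ∨ StarSep E (pa E i) i j := by
  by_cases hji : Relation.TransGen E j i
  · right
    rintro ⟨p, hp, -⟩
    exact dsep_key E hA j i hij.symm (fun h => hnadj h.symm)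
      (fun h => hA i (h.trans hji)) ⟨p, hp⟩
  · left
    rintro ⟨p, hp, -⟩
    exact dsep_key E hA i j hij hnadj hji ⟨p.reverse, dconn_reverse hp⟩
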